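/- The fourth composition power of a first-order differential operator L satisfies L⁴ = L^{•4} + 6·(L∘L) • L^{•2} + 4·L • (L²∘L) + 3·(L∘L)^{•2} + L³ ∘ L. -/

import Mathlib

open Finsupp

/-- The space of linear differential operators in `n` variables (with polynomial
coefficients over `ℂ`): a formal finite sum `Σ_α u_α ∂^α`. -/
abbrev Diff (n : ℕ) := (Fin n →₀ ℕ) →₀ MvPolynomial (Fin n) ℂ

/-- The operator `∂^α = ∂₁^{α₁} ⋯ ∂ₙ^{αₙ}` acting on coefficient functions. -/
noncomputable def Dop {n : ℕ} (α : Fin n →₀ ℕ) :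
    Module.End ℂ (MvPolynomial (Fin n) ℂ) :=
  (List.ofFn fun i : Fin n => ((MvPolynomial.pderiv i).toLinearMap) ^ (α i)).prod

/-- White multiplication: `(u ∂^α) ∘ (v ∂^β) = u ∂^α(v) ∂^β`, extended bilinearly. -/
noncomputable def white {n : ℕ} (X Y : Diff n) : Diff n :=
  X.sum fun α u => Y.sum fun β v => Finsupp.single β (u * Dop α v)

/-- Black multiplication: `(u ∂^α) • (v ∂^β) = u v ∂^{α+β}`, extended bilinearly. -/
noncomputable def black {n : ℕ} (X Y : Diff n) : Diff n :=
  X.sum fun α u => Y.sum fun β v => Finsupp.single (α + β) (u * v)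

/-- Composition of differential operators:
`(u ∂^α) ⋄ (v ∂^β) = Σ_{γ ≤ α} binom(α,γ) u ∂^γ(v) ∂^{α+β-γ}`, extended bilinearly. -/
noncomputable def diam {n : ℕ} (X Y : Diff n) : Diff n :=
  X.sum fun α u => Y.sum fun β v =>
    ∑ γ ∈ Finset.Iic α,
      Finsupp.single (α + β - γ) (((∏ i, ((α i).choose (γ i)) : ℕ) : ℂ) • (u * Dop γ v))

/-- A differential operator is of first order (a vector field) if it has the
form `Σ_i u_i ∂_i`, i.e. every multi-index in its support has total degree 1. -/
def IsVect {n : ℕ} (X : Diff n) : Prop :=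
  ∀ α ∈ X.support, (α.sum fun _ k => k) = 1

/-- The identity differential operator `1·∂^0`. -/
noncomputable def unitD {n : ℕ} : Diff n := Finsupp.single 0 1

/-- Composition (`⋄`-)power `L^m = L ⋄ ⋯ ⋄ L`. -/
noncomputable def dpow {n : ℕ} (L : Diff n) : ℕ → Diff n
  | 0 => unitD
  | m + 1 => diam L (dpow L m)

/-- Black power `X^{•k} = X • ⋯ • X`. -/
noncomputable def bpow {n : ℕ} (X : Diff n) : ℕ → Diff n
  | 0 => unitD
  | k + 1 => black X (bpow X k)


-- ===== auxiliary lemmas =====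

private lemma prod_ofFn_mul' {M : Type*} [Monoid M] :
    ∀ {m : ℕ} (f g : Fin m → M), (∀ i j, Commute (f i) (g j)) →
      (List.ofFn fun i => f i * g i).prod = (List.ofFn f).prod * (List.ofFn g).prod := by
  intro m
  induction m with
  | zero => intro f g _; simp
  | succ k ih =>
    intro f g h
    simp only [List.ofFn_succ, List.prod_cons]
    rw [ih (fun i => f i.succ) (fun i => g i.succ) (fun i j => h i.succ j.succ)]
    have hc : Commute (g 0) (List.ofFn fun i : Fin k => f i.succ).prod := by
      apply Commute.list_prod_right
      intro x hx
      obtain ⟨i, rfl⟩ := List.mem_ofFn.mp hx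
      exact (h i.succ 0).symm
    exact hc.mul_mul_mul_comm (f 0) _

private lemma prod_ofFn_eq_single' {M : Type*} [Monoid M] :
    ∀ {m : ℕ} (f : Fin m → M) (i : Fin m), (∀ j, j ≠ i → f j = 1) →
      (List.ofFn f).prod = f i := by
  intro m
  induction m with
  | zero => exact fun f i _ => i.elim0
  | succ k ih =>
    intro f i h
    simp only [List.ofFn_succ, List.prod_cons]
    cases i using Fin.cases with
    | zero =>
      have : (List.ofFn fun j : Fin k => f j.succ).prod = 1 := by
        apply List.prod_eq_one
        intro x hx
        obtain ⟨j, rfl⟩ := List.mem_ofFn.mp hx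
        exact h j.succ (Fin.succ_ne_zero j)
      rw [this, mul_one]
    | succ i =>
      rw [h 0 (Fin.succ_ne_zero i).symm, one_mul]
      exact ih (fun j => f j.succ) i fun j hj => h j.succ (by simpa using hj)

private lemma pderiv_commute {n : ℕ} (i j : Fin n) :
    Commute ((MvPolynomial.pderiv (R := ℂ) i).toLinearMap)
      ((MvPolynomial.pderiv (R := ℂ) j).toLinearMap) := by
  have key : ∀ p : MvPolynomial (Fin n) ℂ,
      MvPolynomial.pderiv i (MvPolynomial.pderiv j p)
        = MvPolynomial.pderiv j (MvPolynomial.pderiv i p) := by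
    intro p
    induction p using MvPolynomial.induction_on with
    | C a => simp
    | add p q hp hq => simp [hp, hq]
    | mul_X p s hp =>
      simp only [MvPolynomial.pderiv_mul, hp, MvPolynomial.pderiv_X, Pi.single_apply,
        apply_ite (MvPolynomial.pderiv i), apply_ite (MvPolynomial.pderiv j),
        MvPolynomial.pderiv_one, map_zero, mul_ite, mul_one, mul_zero, map_add, add_zero]
      ring
  exact LinearMap.ext fun p => key p

lemma Dop_zero {n : ℕ} : (Dop (n := n) 0) = 1 := by
  simp [Dop, List.ofFn_const]

lemma Dop_add {n : ℕ} (α β : Fin n →₀ ℕ) : Dop (α + β) = Dop α * Dop β := by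
  unfold Dop
  rw [← prod_ofFn_mul']
  · simp [pow_add]
  · intro i j
    exact (pderiv_commute i j).pow_pow _ _

lemma vect_single {n : ℕ} {α : Fin n →₀ ℕ} (h : (α.sum fun _ k => k) = 1) :
    ∃ i, α = Finsupp.single i 1 := by
  have hne : α ≠ 0 := by rintro rfl; simp [Finsupp.sum] at h
  have hcard : α.support.card ≤ 1 := by
    have h2 := Finset.card_nsmul_le_sum α.support (fun a => α a) 1
      (fun a ha => Nat.one_le_iff_ne_zero.mpr (Finsupp.mem_support_iff.mp ha))
    rw [smul_eq_mul, mul_one] at h2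
    exact h2.trans_eq h
  have hpos : 0 < α.support.card :=
    Finset.card_pos.mpr (Finsupp.support_nonempty_iff.mpr hne)
  obtain ⟨i, hi⟩ := Finset.card_eq_one.mp (le_antisymm hcard hpos)
  have hsum : α.sum (fun _ k => k) = α i := by rw [Finsupp.sum, hi, Finset.sum_singleton]
  have hαi : α i = 1 := by rw [← hsum, h]
  refine ⟨i, ?_⟩
  have h2 := (Finsupp.support_eq_singleton.mp hi).2
  rw [hαi] at h2
  exact h2

lemma Dop_vect {n : ℕ} (i : Fin n) :
    Dop (Finsupp.single i 1) = (MvPolynomial.pderiv (R := ℂ) i).toLinearMap := by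
  unfold Dop
  rw [prod_ofFn_eq_single' _ i]
  · simp
  · intro j hj
    rw [Finsupp.single_eq_of_ne' (Ne.symm hj), pow_zero]

lemma Iic_single {n : ℕ} (i : Fin n) :
    Finset.Iic (Finsupp.single i (1:ℕ)) = {0, Finsupp.single i 1} := by
  ext γ
  simp only [Finset.mem_Iic, Finset.mem_insert, Finset.mem_singleton]
  constructor
  · intro hγ
    have hγ' : ∀ j, γ j ≤ Finsupp.single i 1 j := fun j => hγ j
    by_cases hγi : γ i = 0
    · left
      ext j
      by_cases hj : j = i
      · subst hj; simpa using hγi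
      · have := hγ' j; rwa [Finsupp.single_eq_of_ne' (Ne.symm hj), Nat.le_zero] at this
    · right
      have h1 : γ i = 1 := by
        have := hγ' i; rw [Finsupp.single_eq_same] at this; omega
      ext j
      by_cases hj : j = i
      · subst hj; simp [h1]
      · have := hγ' j; rw [Finsupp.single_eq_of_ne' (Ne.symm hj), Nat.le_zero] at this
        simp [this, Finsupp.single_eq_of_ne' (Ne.symm hj)]
  · rintro (rfl | rfl)
    · exact zero_le
    · exact le_refl _

-- ===== black is AddMonoidAlgebra multiplication =====

lemma black_eq_mul {n : ℕ} (X Y : Diff n) :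
    black X Y = (AddMonoidAlgebra.ofCoeff X * AddMonoidAlgebra.ofCoeff Y).coeff := by
  rw [AddMonoidAlgebra.mul_def]; simp [black, AddMonoidAlgebra.coeff_single]

lemma black_comm {n : ℕ} (X Y : Diff n) : black X Y = black Y X := by
  rw [black_eq_mul, black_eq_mul, mul_comm]

lemma black_assoc {n : ℕ} (X Y Z : Diff n) : black (black X Y) Z = black X (black Y Z) := by
  simp only [black_eq_mul, AddMonoidAlgebra.ofCoeff_coeff, mul_assoc]

lemma black_left_comm {n : ℕ} (X Y Z : Diff n) :
    black X (black Y Z) = black Y (black X Z) := by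
  rw [← black_assoc, black_comm X Y, black_assoc]

lemma black_unit {n : ℕ} (X : Diff n) : black X unitD = X := by
  have h1 : (1 : AddMonoidAlgebra (MvPolynomial (Fin n) ℂ) (Fin n →₀ ℕ)).coeff = unitD :=
    rfl
  rw [black_eq_mul, ← h1, AddMonoidAlgebra.ofCoeff_coeff, mul_one, AddMonoidAlgebra.coeff_ofCoeff]

lemma black_add_left {n : ℕ} (X X' Y : Diff n) :
    black (X + X') Y = black X Y + black X' Y := by
  rw [black_eq_mul, black_eq_mul, black_eq_mul, AddMonoidAlgebra.ofCoeff_add, add_mul,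
    AddMonoidAlgebra.coeff_add]

lemma black_add_right {n : ℕ} (X Y Y' : Diff n) :
    black X (Y + Y') = black X Y + black X Y' := by
  rw [black_eq_mul, black_eq_mul, black_eq_mul, AddMonoidAlgebra.ofCoeff_add, mul_add,
    AddMonoidAlgebra.coeff_add]

-- ===== white bilinearity and expansions =====

lemma white_add_left {n : ℕ} (X X' Y : Diff n) :
    white (X + X') Y = white X Y + white X' Y := by
  unfold white
  apply Finsupp.sum_add_index'
  · intro α
    simp only [zero_mul, Finsupp.single_zero, Finsupp.sum_fun_zero]
  · intro α u u'
    simp only [add_mul, Finsupp.single_add, Finsupp.sum_add]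

lemma white_add_right {n : ℕ} (X Y Y' : Diff n) :
    white X (Y + Y') = white X Y + white X Y' := by
  unfold white
  rw [← Finsupp.sum_add]
  apply Finsupp.sum_congr
  intro α _
  apply Finsupp.sum_add_index'
  · intro β
    simp only [map_zero, mul_zero, Finsupp.single_zero]
  · intro β v v'
    simp only [map_add, mul_add, Finsupp.single_add]

lemma white_black_expand {n : ℕ} (L Y Z : Diff n) :
    white L (black Y Z) = L.sum fun α u => Y.sum fun β v => Z.sum fun γ w =>
      Finsupp.single (β + γ) (u * Dop α (v * w)) := by
  unfold white black
  apply Finsupp.sum_congr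
  intro α _
  rw [Finsupp.sum_sum_index (fun _ => by simp) (fun a b₁ b₂ => by simp [mul_add])]
  apply Finsupp.sum_congr
  intro β _
  rw [Finsupp.sum_sum_index (fun _ => by simp) (fun a b₁ b₂ => by simp [mul_add])]
  apply Finsupp.sum_congr
  intro γ _
  rw [Finsupp.sum_single_index (by simp)]

lemma black_white_left_expand {n : ℕ} (L Y Z : Diff n) :
    black (white L Y) Z = L.sum fun α u => Y.sum fun β v => Z.sum fun γ w =>
      Finsupp.single (β + γ) ((u * Dop α v) * w) := by
  unfold white black
  rw [Finsupp.sum_sum_index (fun _ => by simp [Finsupp.sum_fun_zero])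
    (fun a b₁ b₂ => by simp [add_mul, Finsupp.single_add, Finsupp.sum_add])]
  apply Finsupp.sum_congr
  intro α _
  rw [Finsupp.sum_sum_index (fun _ => by simp [Finsupp.sum_fun_zero])
    (fun a b₁ b₂ => by simp [add_mul, Finsupp.single_add, Finsupp.sum_add])]
  apply Finsupp.sum_congr
  intro β _
  rw [Finsupp.sum_single_index (by simp [Finsupp.sum_fun_zero])]

lemma black_white_right_expand {n : ℕ} (L Y Z : Diff n) :
    black Y (white L Z) = L.sum fun α u => Y.sum fun β v => Z.sum fun γ w =>
      Finsupp.single (β + γ) (v * (u * Dop α w)) := by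
  unfold white black
  rw [Finsupp.sum_comm]
  rw [Finsupp.sum_sum_index (fun _ => by simp [Finsupp.sum_fun_zero])
    (fun a b₁ b₂ => by simp [mul_add, Finsupp.single_add, Finsupp.sum_add])]
  apply Finsupp.sum_congr
  intro α _
  rw [Finsupp.sum_sum_index (fun _ => by simp [Finsupp.sum_fun_zero])
    (fun a b₁ b₂ => by simp [mul_add, Finsupp.single_add, Finsupp.sum_add])]
  refine Eq.trans (Finsupp.sum_congr ?_) (Finsupp.sum_comm _ _ _)
  intro γ _
  rw [Finsupp.sum_single_index (by simp [Finsupp.sum_fun_zero])]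

lemma white_white_left_expand {n : ℕ} (L Y Z : Diff n) :
    white (white L Y) Z = L.sum fun α u => Y.sum fun β v => Z.sum fun γ w =>
      Finsupp.single γ ((u * Dop α v) * Dop β w) := by
  unfold white
  rw [Finsupp.sum_sum_index (fun _ => by simp [Finsupp.sum_fun_zero])
    (fun a b₁ b₂ => by simp [add_mul, Finsupp.single_add, Finsupp.sum_add])]
  apply Finsupp.sum_congr
  intro α _
  rw [Finsupp.sum_sum_index (fun _ => by simp [Finsupp.sum_fun_zero])
    (fun a b₁ b₂ => by simp [add_mul, Finsupp.single_add, Finsupp.sum_add])]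
  apply Finsupp.sum_congr
  intro β _
  rw [Finsupp.sum_single_index (by simp [Finsupp.sum_fun_zero])]

lemma white_black_left_expand {n : ℕ} (L Y Z : Diff n) :
    white (black L Y) Z = L.sum fun α u => Y.sum fun β v => Z.sum fun γ w =>
      Finsupp.single γ ((u * v) * Dop (α + β) w) := by
  unfold white black
  rw [Finsupp.sum_sum_index (fun _ => by simp [Finsupp.sum_fun_zero])
    (fun a b₁ b₂ => by simp [add_mul, Finsupp.single_add, Finsupp.sum_add])]
  apply Finsupp.sum_congr
  intro α _
  rw [Finsupp.sum_sum_index (fun _ => by simp [Finsupp.sum_fun_zero])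
    (fun a b₁ b₂ => by simp [add_mul, Finsupp.single_add, Finsupp.sum_add])]
  apply Finsupp.sum_congr
  intro β _
  rw [Finsupp.sum_single_index (by simp [Finsupp.sum_fun_zero])]

lemma white_white_right_expand {n : ℕ} (L Y Z : Diff n) :
    white L (white Y Z) = L.sum fun α u => Y.sum fun β v => Z.sum fun γ w =>
      Finsupp.single γ (u * Dop α (v * Dop β w)) := by
  unfold white
  apply Finsupp.sum_congr
  intro α _
  rw [Finsupp.sum_sum_index (fun _ => by simp) (fun a b₁ b₂ => by simp [mul_add])]
  apply Finsupp.sum_congr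
  intro β _
  rw [Finsupp.sum_sum_index (fun _ => by simp) (fun a b₁ b₂ => by simp [mul_add])]
  apply Finsupp.sum_congr
  intro γ _
  rw [Finsupp.sum_single_index (by simp)]

-- ===== derivation identities for vector fields =====

lemma white_black_deriv {n : ℕ} {L : Diff n} (hL : IsVect L) (Y Z : Diff n) :
    white L (black Y Z) = black (white L Y) Z + black Y (white L Z) := by
  rw [white_black_expand, black_white_left_expand, black_white_right_expand,
    ← Finsupp.sum_add]
  apply Finsupp.sum_congr
  intro α hα
  rw [← Finsupp.sum_add]
  apply Finsupp.sum_congr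
  intro β _
  rw [← Finsupp.sum_add]
  apply Finsupp.sum_congr
  intro γ _
  obtain ⟨i, rfl⟩ := vect_single (hL α hα)
  rw [Dop_vect, ← Finsupp.single_add]
  congr 1
  simp only [LinearMap.coe_mk, Derivation.coeFn_coe, MvPolynomial.pderiv_mul]
  ring

lemma white_white_deriv {n : ℕ} {L : Diff n} (hL : IsVect L) (Y Z : Diff n) :
    white L (white Y Z) = white (white L Y) Z + white (black L Y) Z := by
  rw [white_white_right_expand, white_white_left_expand, white_black_left_expand,
    ← Finsupp.sum_add]
  apply Finsupp.sum_congr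
  intro α hα
  rw [← Finsupp.sum_add]
  apply Finsupp.sum_congr
  intro β _
  rw [← Finsupp.sum_add]
  apply Finsupp.sum_congr
  intro γ _
  obtain ⟨i, rfl⟩ := vect_single (hL α hα)
  rw [Dop_add, ← Finsupp.single_add]
  congr 1
  rw [Dop_vect]
  simp only [Module.End.mul_apply, Derivation.coeFn_coe, MvPolynomial.pderiv_mul]
  ring

lemma white_unitD {n : ℕ} {L : Diff n} (hL : IsVect L) : white L unitD = 0 := by
  unfold white unitD
  have : (L.sum fun α u => (Finsupp.single (0 : Fin n →₀ ℕ)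
      (1 : MvPolynomial (Fin n) ℂ)).sum fun β v => Finsupp.single β (u * Dop α v))
      = L.sum fun _ _ => (0 : Diff n) := by
    apply Finsupp.sum_congr
    intro α hα
    rw [Finsupp.sum_single_index (by simp)]
    obtain ⟨i, rfl⟩ := vect_single (hL α hα)
    rw [Dop_vect]
    simp [MvPolynomial.pderiv_one]
  rw [this, Finsupp.sum_fun_zero]

lemma diam_vect {n : ℕ} {L : Diff n} (hL : IsVect L) (Y : Diff n) :
    diam L Y = black L Y + white L Y := by
  unfold diam black white
  rw [← Finsupp.sum_add]
  apply Finsupp.sum_congr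
  intro α hα
  rw [← Finsupp.sum_add]
  apply Finsupp.sum_congr
  intro β _
  obtain ⟨i, rfl⟩ := vect_single (hL α hα)
  rw [Iic_single, Finset.sum_pair (by
    intro h
    have h2 := congrArg (fun f : Fin n →₀ ℕ => f i) h
    simp at h2)]
  congr 1
  · rw [tsub_zero]
    simp [Dop_zero]
  · rw [add_tsub_cancel_left]
    simp [Nat.choose_self]

/-- `L⁴ = L^{•4} + 6·(L∘L)•L^{•2} + 4·L•(L²∘L) + 3·(L∘L)^{•2} + L³∘L`. -/
theorem dpow_four {n : ℕ} (L : Diff n) (hL : IsVect L) :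
    dpow L 4 =
      bpow L 4 + 6 • black (white L L) (bpow L 2) +
        4 • black L (white (dpow L 2) L) + 3 • bpow (white L L) 2 +
        white (dpow L 3) L := by
  have hD : ∀ Y : Diff n, diam L Y = black L Y + white L Y := diam_vect hL
  have hWB : ∀ Y Z : Diff n, white L (black Y Z) = black (white L Y) Z + black Y (white L Z) :=
    white_black_deriv hL
  have hWW : ∀ Y Z : Diff n, white L (white Y Z) = white (white L Y) Z + white (black L Y) Z :=
    white_white_deriv hL
  have hU : white L unitD = 0 := white_unitD hL
  show diam L (diam L (diam L (diam L unitD))) =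
      black L (black L (black L (black L unitD))) +
        6 • black (white L L) (black L (black L unitD)) +
        4 • black L (white (diam L (diam L unitD)) L) +
        3 • black (white L L) (black (white L L) unitD) +
        white (diam L (diam L (diam L unitD))) L
  simp only [hD, hU, black_unit, add_zero]
  simp only [black_add_right, black_add_left, white_add_left, white_add_right, hWB, hWW]
  simp only [smul_add]
  simp only [black_comm, black_left_comm, black_assoc]
  abel
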